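/- Let $c > 0$, $k > 0$, $\rho_0 > 0$, $u_0' \in \mathbb{R}$, and define $\Gamma(t) = 1 + \dfrac{u_0'}{\sqrt{ck}} \sin(\sqrt{ck}\,t) - \dfrac{\rho_0 - c}{c}\big(\cos(\sqrt{ck}\,t) - 1\big)$. Then $\Gamma(t) > 0$ for all $t \geq 0$ if and only if $|u_0'| < \sqrt{k(2\rho_0 - c)}$. -/

import Mathlib

set_option maxHeartbeats 1600000 in
theorem critical_threshold_constant_background
    (c k ρ0 u0' : ℝ) (hc : 0 < c) (hk : 0 < k) (hρ0 : 0 < ρ0)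
    (Γ : ℝ → ℝ)
    (hΓ : ∀ t, Γ t = 1 + u0' / Real.sqrt (c * k) * Real.sin (Real.sqrt (c * k) * t)
        - (ρ0 - c) / c * (Real.cos (Real.sqrt (c * k) * t) - 1)) :
    (∀ t ≥ (0:ℝ), 0 < Γ t) ↔ |u0'| < Real.sqrt (k * (2 * ρ0 - c)) := by
  set ω := Real.sqrt (c * k) with hωdef
  have hck : 0 < c * k := mul_pos hc hk
  have hω : 0 < ω := Real.sqrt_pos.mpr hck
  have hω2 : ω ^ 2 = c * k := Real.sq_sqrt hck.le
  set a := u0' / ω with hadef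
  set b := (ρ0 - c) / c with hbdef
  have ha2 : a ^ 2 * (c * k) = u0' ^ 2 := by
    rw [hadef, div_pow, hω2]
    field_simp
  have hbc : b * c = ρ0 - c := by
    rw [hbdef]; field_simp
  have hΓ' : ∀ t, Γ t = (1 + b) + (a * Real.sin (ω * t) - b * Real.cos (ω * t)) := by
    intro t; rw [hΓ t]; ring
  constructor
  · intro hpos
    by_contra hn
    push_neg at hn
    have hq : k * (2 * ρ0 - c) ≤ u0' ^ 2 := by
      rcases le_or_gt (k * (2 * ρ0 - c)) 0 with h | h
      · nlinarith [sq_nonneg u0']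
      · calc k * (2 * ρ0 - c) = Real.sqrt (k * (2 * ρ0 - c)) ^ 2 := (Real.sq_sqrt h.le).symm
          _ ≤ |u0'| ^ 2 := pow_le_pow_left₀ (Real.sqrt_nonneg _) hn 2
          _ = u0' ^ 2 := sq_abs u0'
    have hab : 1 + 2 * b ≤ a ^ 2 := by
      nlinarith [mul_pos hk hc, sq_nonneg a]
    set z : ℂ := ⟨b, -a⟩ with hzdef
    have hre : z.re = b := rfl
    have him : z.im = -a := rfl
    have habs : ‖z‖ = Real.sqrt (a ^ 2 + b ^ 2) := by
      rw [Complex.norm_def, Complex.normSq_apply, hre, him]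
      congr 1; ring
    have hz0 : z ≠ 0 := by
      intro h0
      have hb0 : b = 0 := by rw [← hre, h0]; rfl
      have ha0 : -a = 0 := by rw [← him, h0]; rfl
      have ha0' : a = 0 := by linarith
      rw [ha0', hb0] at hab; norm_num at hab
    set θ := Complex.arg z + 2 * Real.pi with hθdef
    have hcos : Real.cos θ = b / Real.sqrt (a ^ 2 + b ^ 2) := by
      rw [hθdef, Real.cos_add_two_pi, Complex.cos_arg hz0, hre, habs]
    have hsin : Real.sin θ = -a / Real.sqrt (a ^ 2 + b ^ 2) := by
      rw [hθdef, Real.sin_add_two_pi, Complex.sin_arg, him, habs]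
    have hθpos : 0 ≤ θ := by
      have h1 := Complex.neg_pi_lt_arg z
      have hπ := Real.pi_pos
      rw [hθdef]; linarith
    set t := θ / ω with htdef
    have ht0 : 0 ≤ t := div_nonneg hθpos hω.le
    have hωt : ω * t = θ := by
      rw [htdef]; field_simp
    have hRpos : 0 < Real.sqrt (a ^ 2 + b ^ 2) := by
      apply Real.sqrt_pos.mpr
      rcases eq_or_ne a 0 with ha | ha
      · rw [ha] at hab ⊢
        nlinarith [sq_nonneg b]
      · positivity
    have hRsq : Real.sqrt (a ^ 2 + b ^ 2) ^ 2 = a ^ 2 + b ^ 2 :=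
      Real.sq_sqrt (by positivity)
    have hΓt : Γ t ≤ 0 := by
      rw [hΓ' t, hωt, hsin, hcos]
      have h1 : a * (-a / Real.sqrt (a ^ 2 + b ^ 2)) - b * (b / Real.sqrt (a ^ 2 + b ^ 2))
          = -Real.sqrt (a ^ 2 + b ^ 2) := by
        have hRne : Real.sqrt (a ^ 2 + b ^ 2) ≠ 0 := hRpos.ne'
        calc a * (-a / Real.sqrt (a ^ 2 + b ^ 2)) - b * (b / Real.sqrt (a ^ 2 + b ^ 2))
            = -((a ^ 2 + b ^ 2) / Real.sqrt (a ^ 2 + b ^ 2)) := by ring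
          _ = -(Real.sqrt (a ^ 2 + b ^ 2) ^ 2 / Real.sqrt (a ^ 2 + b ^ 2)) := by rw [hRsq]
          _ = -Real.sqrt (a ^ 2 + b ^ 2) := by
              rw [sq, mul_div_assoc, div_self hRne, mul_one]
      rw [h1]
      nlinarith [hRsq, hRpos, hab, sq_nonneg (Real.sqrt (a ^ 2 + b ^ 2) + 1 + b)]
    exact absurd (hpos t ht0) (by linarith)
  · intro h t ht
    have hq : u0' ^ 2 < k * (2 * ρ0 - c) := by
      have h2 := (Real.lt_sqrt (abs_nonneg u0')).mp h
      rwa [sq_abs] at h2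
    have hab : a ^ 2 < 1 + 2 * b := by
      have h5 : (1 + 2 * b) * (c * k) = k * (2 * ρ0 - c) := by linear_combination 2 * k * hbc
      have key : a ^ 2 * (c * k) < (1 + 2 * b) * (c * k) := by rw [ha2, h5]; exact hq
      exact lt_of_mul_lt_mul_right key hck.le
    have hb1 : (0:ℝ) < 1 + b := by linarith [sq_nonneg a]
    have hRlt : Real.sqrt (a ^ 2 + b ^ 2) < 1 + b := by
      rw [Real.sqrt_lt' hb1]
      nlinarith [hab, sq_nonneg b]
    have hbound : |a * Real.sin (ω * t) - b * Real.cos (ω * t)|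
        ≤ Real.sqrt (a ^ 2 + b ^ 2) := by
      apply Real.abs_le_sqrt
      nlinarith [Real.sin_sq_add_cos_sq (ω * t),
        sq_nonneg (a * Real.cos (ω * t) + b * Real.sin (ω * t)),
        sq_nonneg a, sq_nonneg b]
    rw [hΓ' t]
    have h3 := (abs_le.mp hbound).1
    linarith
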